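/- Let n, K ≥ 1, let (Ω, 𝒜, ℙ) be a probability space, let T ⊆ S ⊆ {1, …, K} with S and T nonempty, and set p₁ = |S|/K and p₂ = |T|/K. Let ξ ∈ {0,1}ⁿ be a binary mask and let ξ' = 1 − ξ (coordinatewise complement). Let w₁, w₂ ∈ ℝ, let σ₁, …, σ_K ≥ 0, and set δ = (1/K)·Σ_{k=1}^{K} σ_k². For each k ∈ {1, …, K}, let a_k, b_k : Ω → ℝⁿ be Bochner square-integrable random vectors with ∫ ‖a_k − ∫a_k dℙ‖² dℙ ≤ σ_k² and ∫ ‖b_k − ∫b_k dℙ‖² dℙ ≤ σ_k², and define g_k = w₁·(ξ ⊙ a_k) + w₂·b_k. Define the random vector f : Ω → ℝⁿ by f = (1/(K p₁))·Σ_{k ∈ S} (ξ ⊙ g_k) + (1/(K p₂))·Σ_{k ∈ T} (ξ' ⊙ g_k). Then the variance of f is bounded by ∫ ‖f − ∫ f dℙ‖² dℙ ≤ 4·δ·(1/p₁ + 1/p₂)·(w₁² + w₂²). -/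

import Mathlib

open MeasureTheory Finset

/-- Coordinatewise (Hadamard) product of a mask `ξ` with a vector `x` in Euclidean space. -/
def hadamard {n : ℕ} (ξ : Fin n → ℝ) (x : EuclideanSpace ℝ (Fin n)) :
    EuclideanSpace ℝ (Fin n) :=
  WithLp.toLp 2 (fun i => ξ i * x i)

namespace SCAux

variable {n : ℕ}

/-- `hadamard ξ` as a linear map. -/
def hadLM (ξ : Fin n → ℝ) : EuclideanSpace ℝ (Fin n) →ₗ[ℝ] EuclideanSpace ℝ (Fin n) where
  toFun := hadamard ξ
  map_add' x y := by
    ext i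
    simp only [hadamard, PiLp.add_apply]
    ring
  map_smul' c x := by
    ext i
    simp only [hadamard, PiLp.smul_apply, smul_eq_mul, RingHom.id_apply]
    ring

/-- `hadamard ξ` as a continuous linear map. -/
noncomputable def hadCLM (ξ : Fin n → ℝ) : EuclideanSpace ℝ (Fin n) →L[ℝ] EuclideanSpace ℝ (Fin n) :=
  LinearMap.toContinuousLinearMap (hadLM ξ)

@[simp] lemma hadCLM_apply (ξ : Fin n → ℝ) (x : EuclideanSpace ℝ (Fin n)) :
    hadCLM ξ x = hadamard ξ x := rfl

lemma norm_hadamard_le {ξ : Fin n → ℝ} (hξ : ∀ i, ξ i = 0 ∨ ξ i = 1)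
    (x : EuclideanSpace ℝ (Fin n)) : ‖hadamard ξ x‖ ≤ ‖x‖ := by
  rw [EuclideanSpace.norm_eq, EuclideanSpace.norm_eq]
  apply Real.sqrt_le_sqrt
  apply Finset.sum_le_sum
  intro i _
  have : hadamard ξ x i = ξ i * x i := rfl
  rw [this]
  rcases hξ i with h | h <;> simp [h] <;> positivity

lemma norm_sum_sq_le {ι : Type*} {E : Type*} [SeminormedAddCommGroup E]
    (s : Finset ι) (v : ι → E) :
    ‖∑ k ∈ s, v k‖ ^ 2 ≤ (s.card : ℝ) * ∑ k ∈ s, ‖v k‖ ^ 2 := by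
  calc ‖∑ k ∈ s, v k‖ ^ 2 ≤ (∑ k ∈ s, ‖v k‖) ^ 2 :=
        pow_le_pow_left₀ (norm_nonneg _) (norm_sum_le s v) 2
    _ ≤ (s.card : ℝ) * ∑ k ∈ s, ‖v k‖ ^ 2 := by
        exact_mod_cast sq_sum_le_card_mul_sum_sq (s := s) (f := fun k => ‖v k‖)

end SCAux

open SCAux

set_option maxHeartbeats 1000000 in
theorem bounded_global_gradient_variance
    (n K : ℕ) (hn : 1 ≤ n) (hK : 1 ≤ K)
    {Ω : Type*} [MeasurableSpace Ω] (ℙ : Measure Ω) [IsProbabilityMeasure ℙ]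
    (S T : Finset (Fin K)) (hTS : T ⊆ S) (hS : S.Nonempty) (hT : T.Nonempty)
    (p₁ p₂ : ℝ) (hp₁ : p₁ = (S.card : ℝ) / K) (hp₂ : p₂ = (T.card : ℝ) / K)
    (ξ ξ' : Fin n → ℝ) (hξ : ∀ i, ξ i = 0 ∨ ξ i = 1) (hξ' : ∀ i, ξ' i = 1 - ξ i)
    (w₁ w₂ : ℝ) (σ : Fin K → ℝ) (hσ : ∀ k, 0 ≤ σ k)
    (δ : ℝ) (hδ : δ = (1 / (K : ℝ)) * ∑ k, σ k ^ 2)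
    (a b : Fin K → Ω → EuclideanSpace ℝ (Fin n))
    (ha : ∀ k, MemLp (a k) 2 ℙ) (hb : ∀ k, MemLp (b k) 2 ℙ)
    (hva : ∀ k, ∫ ω, ‖a k ω - ∫ ω', a k ω' ∂ℙ‖ ^ 2 ∂ℙ ≤ σ k ^ 2)
    (hvb : ∀ k, ∫ ω, ‖b k ω - ∫ ω', b k ω' ∂ℙ‖ ^ 2 ∂ℙ ≤ σ k ^ 2)
    (g : Fin K → Ω → EuclideanSpace ℝ (Fin n))
    (hg : ∀ k ω, g k ω = w₁ • hadamard ξ (a k ω) + w₂ • b k ω)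
    (f : Ω → EuclideanSpace ℝ (Fin n))
    (hf : ∀ ω, f ω = (1 / ((K : ℝ) * p₁)) • ∑ k ∈ S, hadamard ξ (g k ω) +
        (1 / ((K : ℝ) * p₂)) • ∑ k ∈ T, hadamard ξ' (g k ω)) :
    ∫ ω, ‖f ω - ∫ ω', f ω' ∂ℙ‖ ^ 2 ∂ℙ ≤
      4 * δ * (1 / p₁ + 1 / p₂) * (w₁ ^ 2 + w₂ ^ 2) := by
  classical
  have hK0 : (0 : ℝ) < K := by exact_mod_cast hK
  have hSc : (0 : ℝ) < S.card := by exact_mod_cast Finset.card_pos.mpr hS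
  have hTc : (0 : ℝ) < T.card := by exact_mod_cast Finset.card_pos.mpr hT
  have hp₁0 : 0 < p₁ := by rw [hp₁]; positivity
  have hp₂0 : 0 < p₂ := by rw [hp₂]; positivity
  have hKp₁ : (K : ℝ) * p₁ = S.card := by rw [hp₁]; field_simp
  have hKp₂ : (K : ℝ) * p₂ = T.card := by rw [hp₂]; field_simp
  have hξ'01 : ∀ i, ξ' i = 0 ∨ ξ' i = 1 := by
    intro i
    rcases hξ i with h | h
    · right; rw [hξ' i, h]; ring
    · left; rw [hξ' i, h]; ring
  set c₁ : ℝ := 1 / ((K : ℝ) * p₁) with hc₁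
  set c₂ : ℝ := 1 / ((K : ℝ) * p₂) with hc₂
  set ma : Fin K → EuclideanSpace ℝ (Fin n) := fun k => ∫ ω, a k ω ∂ℙ with hma
  set mb : Fin K → EuclideanSpace ℝ (Fin n) := fun k => ∫ ω, b k ω ∂ℙ with hmb
  have ia : ∀ k, Integrable (a k) ℙ := fun k => (ha k).integrable one_le_two
  have ib : ∀ k, Integrable (b k) ℙ := fun k => (hb k).integrable one_le_two
  -- pointwise algebraic identities for hadamard products
  have e1 : ∀ x y : EuclideanSpace ℝ (Fin n),
      hadamard ξ (w₁ • hadamard ξ x + w₂ • y)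
        = w₁ • hadamard ξ x + w₂ • hadamard ξ y := by
    intro x y
    ext i
    have hl : hadamard ξ (w₁ • hadamard ξ x + w₂ • y) i
        = ξ i * (w₁ * (ξ i * x i) + w₂ * y i) := rfl
    have hr : (w₁ • hadamard ξ x + w₂ • hadamard ξ y : EuclideanSpace ℝ (Fin n)) i
        = w₁ * (ξ i * x i) + w₂ * (ξ i * y i) := rfl
    rw [hl, hr]
    rcases hξ i with h | h <;> rw [h] <;> ring
  have e2 : ∀ x y : EuclideanSpace ℝ (Fin n),
      hadamard ξ' (w₁ • hadamard ξ x + w₂ • y) = w₂ • hadamard ξ' y := by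
    intro x y
    ext i
    have hl : hadamard ξ' (w₁ • hadamard ξ x + w₂ • y) i
        = ξ' i * (w₁ * (ξ i * x i) + w₂ * y i) := rfl
    have hr : (w₂ • hadamard ξ' y : EuclideanSpace ℝ (Fin n)) i
        = w₂ * (ξ' i * y i) := rfl
    rw [hl, hr, hξ' i]
    rcases hξ i with h | h <;> rw [h] <;> ring
  -- rewrite f
  have hfr : ∀ ω, f ω = (c₁ * w₁) • ∑ k ∈ S, hadCLM ξ (a k ω)
      + (c₁ * w₂) • ∑ k ∈ S, hadCLM ξ (b k ω)
      + (c₂ * w₂) • ∑ k ∈ T, hadCLM ξ' (b k ω) := by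
    intro ω
    rw [hf ω]
    simp only [hg, e1, e2, hadCLM_apply]
    rw [Finset.sum_add_distrib, ← Finset.smul_sum, ← Finset.smul_sum, ← Finset.smul_sum,
      smul_add, smul_smul, smul_smul, smul_smul]
  have iHa : ∀ k, Integrable (fun ω => hadCLM ξ (a k ω)) ℙ :=
    fun k => (hadCLM ξ).integrable_comp (ia k)
  have iHb : ∀ k, Integrable (fun ω => hadCLM ξ (b k ω)) ℙ :=
    fun k => (hadCLM ξ).integrable_comp (ib k)
  have iHb' : ∀ k, Integrable (fun ω => hadCLM ξ' (b k ω)) ℙ :=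
    fun k => (hadCLM ξ').integrable_comp (ib k)
  have I1 : Integrable (fun ω => (c₁ * w₁) • ∑ k ∈ S, hadCLM ξ (a k ω)) ℙ :=
    (integrable_finset_sum S fun k _ => iHa k).smul (c₁ * w₁)
  have I2 : Integrable (fun ω => (c₁ * w₂) • ∑ k ∈ S, hadCLM ξ (b k ω)) ℙ :=
    (integrable_finset_sum S fun k _ => iHb k).smul (c₁ * w₂)
  have I3 : Integrable (fun ω => (c₂ * w₂) • ∑ k ∈ T, hadCLM ξ' (b k ω)) ℙ :=
    (integrable_finset_sum T fun k _ => iHb' k).smul (c₂ * w₂)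
  have hIf : ∫ ω, f ω ∂ℙ = (c₁ * w₁) • ∑ k ∈ S, hadCLM ξ (ma k)
      + (c₁ * w₂) • ∑ k ∈ S, hadCLM ξ (mb k)
      + (c₂ * w₂) • ∑ k ∈ T, hadCLM ξ' (mb k) := by
    have : (fun ω => f ω) = fun ω => (c₁ * w₁) • ∑ k ∈ S, hadCLM ξ (a k ω)
        + (c₁ * w₂) • ∑ k ∈ S, hadCLM ξ (b k ω)
        + (c₂ * w₂) • ∑ k ∈ T, hadCLM ξ' (b k ω) := funext hfr
    have I12 : Integrable (fun ω => (c₁ * w₁) • ∑ k ∈ S, hadCLM ξ (a k ω)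
        + (c₁ * w₂) • ∑ k ∈ S, hadCLM ξ (b k ω)) ℙ := I1.add I2
    rw [this, integral_add I12 I3, integral_add I1 I2,
      integral_smul, integral_smul, integral_smul,
      integral_finset_sum S (fun k _ => iHa k),
      integral_finset_sum S (fun k _ => iHb k),
      integral_finset_sum T (fun k _ => iHb' k)]
    have ca : ∀ k, ∫ ω, hadCLM ξ (a k ω) ∂ℙ = hadCLM ξ (ma k) :=
      fun k => (hadCLM ξ).integral_comp_comm (ia k)
    have cb : ∀ k, ∫ ω, hadCLM ξ (b k ω) ∂ℙ = hadCLM ξ (mb k) :=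
      fun k => (hadCLM ξ).integral_comp_comm (ib k)
    have cb' : ∀ k, ∫ ω, hadCLM ξ' (b k ω) ∂ℙ = hadCLM ξ' (mb k) :=
      fun k => (hadCLM ξ').integral_comp_comm (ib k)
    simp only [ca, cb, cb']
  -- centered decomposition
  have hcent : ∀ ω, f ω - ∫ ω', f ω' ∂ℙ
      = (c₁ * w₁) • ∑ k ∈ S, hadCLM ξ (a k ω - ma k)
      + (c₁ * w₂) • ∑ k ∈ S, hadCLM ξ (b k ω - mb k)
      + (c₂ * w₂) • ∑ k ∈ T, hadCLM ξ' (b k ω - mb k) := by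
    intro ω
    rw [hfr ω, hIf]
    simp only [map_sub, Finset.sum_sub_distrib, smul_sub]
    abel
  -- pointwise squared-norm bound
  have key : ∀ ω, ‖f ω - ∫ ω', f ω' ∂ℙ‖ ^ 2
      ≤ 3 * ((c₁ * w₁) ^ 2 * S.card * ∑ k ∈ S, ‖a k ω - ma k‖ ^ 2
        + (c₁ * w₂) ^ 2 * S.card * ∑ k ∈ S, ‖b k ω - mb k‖ ^ 2
        + (c₂ * w₂) ^ 2 * T.card * ∑ k ∈ T, ‖b k ω - mb k‖ ^ 2) := by
    intro ω
    rw [hcent ω]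
    set X := (c₁ * w₁) • ∑ k ∈ S, hadCLM ξ (a k ω - ma k) with hX
    set Y := (c₁ * w₂) • ∑ k ∈ S, hadCLM ξ (b k ω - mb k) with hY
    set Z := (c₂ * w₂) • ∑ k ∈ T, hadCLM ξ' (b k ω - mb k) with hZ
    have bX : ‖X‖ ^ 2 ≤ (c₁ * w₁) ^ 2 * S.card * ∑ k ∈ S, ‖a k ω - ma k‖ ^ 2 := by
      rw [hX, norm_smul, mul_pow, Real.norm_eq_abs, sq_abs, mul_assoc]
      apply mul_le_mul_of_nonneg_left ?_ (sq_nonneg _)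
      calc ‖∑ k ∈ S, hadCLM ξ (a k ω - ma k)‖ ^ 2
          ≤ (S.card : ℝ) * ∑ k ∈ S, ‖hadCLM ξ (a k ω - ma k)‖ ^ 2 :=
            norm_sum_sq_le S _
        _ ≤ (S.card : ℝ) * ∑ k ∈ S, ‖a k ω - ma k‖ ^ 2 := by
            apply mul_le_mul_of_nonneg_left ?_ (Nat.cast_nonneg _)
            apply Finset.sum_le_sum
            intro k _
            have h := norm_hadamard_le hξ (a k ω - ma k)
            rw [hadCLM_apply]
            exact pow_le_pow_left₀ (norm_nonneg _) h 2
    have bY : ‖Y‖ ^ 2 ≤ (c₁ * w₂) ^ 2 * S.card * ∑ k ∈ S, ‖b k ω - mb k‖ ^ 2 := by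
      rw [hY, norm_smul, mul_pow, Real.norm_eq_abs, sq_abs, mul_assoc]
      apply mul_le_mul_of_nonneg_left ?_ (sq_nonneg _)
      calc ‖∑ k ∈ S, hadCLM ξ (b k ω - mb k)‖ ^ 2
          ≤ (S.card : ℝ) * ∑ k ∈ S, ‖hadCLM ξ (b k ω - mb k)‖ ^ 2 :=
            norm_sum_sq_le S _
        _ ≤ (S.card : ℝ) * ∑ k ∈ S, ‖b k ω - mb k‖ ^ 2 := by
            apply mul_le_mul_of_nonneg_left ?_ (Nat.cast_nonneg _)
            apply Finset.sum_le_sum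
            intro k _
            have h := norm_hadamard_le hξ (b k ω - mb k)
            rw [hadCLM_apply]
            exact pow_le_pow_left₀ (norm_nonneg _) h 2
    have bZ : ‖Z‖ ^ 2 ≤ (c₂ * w₂) ^ 2 * T.card * ∑ k ∈ T, ‖b k ω - mb k‖ ^ 2 := by
      rw [hZ, norm_smul, mul_pow, Real.norm_eq_abs, sq_abs, mul_assoc]
      apply mul_le_mul_of_nonneg_left ?_ (sq_nonneg _)
      calc ‖∑ k ∈ T, hadCLM ξ' (b k ω - mb k)‖ ^ 2
          ≤ (T.card : ℝ) * ∑ k ∈ T, ‖hadCLM ξ' (b k ω - mb k)‖ ^ 2 :=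
            norm_sum_sq_le T _
        _ ≤ (T.card : ℝ) * ∑ k ∈ T, ‖b k ω - mb k‖ ^ 2 := by
            apply mul_le_mul_of_nonneg_left ?_ (Nat.cast_nonneg _)
            apply Finset.sum_le_sum
            intro k _
            have h := norm_hadamard_le hξ'01 (b k ω - mb k)
            rw [hadCLM_apply]
            exact pow_le_pow_left₀ (norm_nonneg _) h 2
    have h3 : ‖X + Y + Z‖ ^ 2 ≤ 3 * (‖X‖ ^ 2 + ‖Y‖ ^ 2 + ‖Z‖ ^ 2) := by
      have ht : ‖X + Y + Z‖ ≤ ‖X‖ + ‖Y‖ + ‖Z‖ := norm_add₃_le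
      nlinarith [norm_nonneg (X + Y + Z), norm_nonneg X, norm_nonneg Y, norm_nonneg Z,
        sq_nonneg (‖X‖ - ‖Y‖), sq_nonneg (‖X‖ - ‖Z‖), sq_nonneg (‖Y‖ - ‖Z‖)]
    linarith
  -- integrability of the dominating function
  have iA2 : ∀ k, Integrable (fun ω => ‖a k ω - ma k‖ ^ 2) ℙ :=
    fun k => ((ha k).sub (memLp_const (ma k))).norm.integrable_sq
  have iB2 : ∀ k, Integrable (fun ω => ‖b k ω - mb k‖ ^ 2) ℙ :=
    fun k => ((hb k).sub (memLp_const (mb k))).norm.integrable_sq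
  have iSA : Integrable (fun ω => ∑ k ∈ S, ‖a k ω - ma k‖ ^ 2) ℙ :=
    integrable_finset_sum S fun k _ => iA2 k
  have iSB : Integrable (fun ω => ∑ k ∈ S, ‖b k ω - mb k‖ ^ 2) ℙ :=
    integrable_finset_sum S fun k _ => iB2 k
  have iTB : Integrable (fun ω => ∑ k ∈ T, ‖b k ω - mb k‖ ^ 2) ℙ :=
    integrable_finset_sum T fun k _ => iB2 k
  have iD : Integrable (fun ω => 3 * ((c₁ * w₁) ^ 2 * S.card * ∑ k ∈ S, ‖a k ω - ma k‖ ^ 2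
      + (c₁ * w₂) ^ 2 * S.card * ∑ k ∈ S, ‖b k ω - mb k‖ ^ 2
      + (c₂ * w₂) ^ 2 * T.card * ∑ k ∈ T, ‖b k ω - mb k‖ ^ 2)) ℙ :=
    (((iSA.const_mul _).add (iSB.const_mul _)).add (iTB.const_mul _)).const_mul 3
  -- integrate the pointwise bound
  have step1 : ∫ ω, ‖f ω - ∫ ω', f ω' ∂ℙ‖ ^ 2 ∂ℙ
      ≤ ∫ ω, 3 * ((c₁ * w₁) ^ 2 * S.card * ∑ k ∈ S, ‖a k ω - ma k‖ ^ 2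
        + (c₁ * w₂) ^ 2 * S.card * ∑ k ∈ S, ‖b k ω - mb k‖ ^ 2
        + (c₂ * w₂) ^ 2 * T.card * ∑ k ∈ T, ‖b k ω - mb k‖ ^ 2) ∂ℙ := by
    apply integral_mono_of_nonneg
    · filter_upwards with ω using sq_nonneg _
    · exact iD
    · filter_upwards with ω using key ω
  have hint : ∫ ω, 3 * ((c₁ * w₁) ^ 2 * S.card * ∑ k ∈ S, ‖a k ω - ma k‖ ^ 2
        + (c₁ * w₂) ^ 2 * S.card * ∑ k ∈ S, ‖b k ω - mb k‖ ^ 2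
        + (c₂ * w₂) ^ 2 * T.card * ∑ k ∈ T, ‖b k ω - mb k‖ ^ 2) ∂ℙ
      = 3 * ((c₁ * w₁) ^ 2 * S.card * ∑ k ∈ S, ∫ ω, ‖a k ω - ma k‖ ^ 2 ∂ℙ
        + (c₁ * w₂) ^ 2 * S.card * ∑ k ∈ S, ∫ ω, ‖b k ω - mb k‖ ^ 2 ∂ℙ
        + (c₂ * w₂) ^ 2 * T.card * ∑ k ∈ T, ∫ ω, ‖b k ω - mb k‖ ^ 2 ∂ℙ) := by
    have j1 : Integrable (fun ω => (c₁ * w₁) ^ 2 * S.card * ∑ k ∈ S, ‖a k ω - ma k‖ ^ 2) ℙ :=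
      iSA.const_mul _
    have j2 : Integrable (fun ω => (c₁ * w₂) ^ 2 * S.card * ∑ k ∈ S, ‖b k ω - mb k‖ ^ 2) ℙ :=
      iSB.const_mul _
    have j3 : Integrable (fun ω => (c₂ * w₂) ^ 2 * T.card * ∑ k ∈ T, ‖b k ω - mb k‖ ^ 2) ℙ :=
      iTB.const_mul _
    have j12 : Integrable (fun ω => (c₁ * w₁) ^ 2 * S.card * ∑ k ∈ S, ‖a k ω - ma k‖ ^ 2
        + (c₁ * w₂) ^ 2 * S.card * ∑ k ∈ S, ‖b k ω - mb k‖ ^ 2) ℙ := j1.add j2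
    rw [integral_const_mul, integral_add j12 j3, integral_add j1 j2,
      integral_const_mul, integral_const_mul, integral_const_mul,
      integral_finset_sum S (fun k _ => iA2 k),
      integral_finset_sum S (fun k _ => iB2 k),
      integral_finset_sum T (fun k _ => iB2 k)]
  -- variance bounds for the sums
  have hKδ : ∑ k, σ k ^ 2 = (K : ℝ) * δ := by
    rw [hδ]; field_simp
  have hnnσ : ∀ k, (0:ℝ) ≤ σ k ^ 2 := fun k => sq_nonneg _
  have hSub : ∀ (U : Finset (Fin K)), ∑ k ∈ U, σ k ^ 2 ≤ (K : ℝ) * δ := by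
    intro U
    rw [← hKδ]
    exact Finset.sum_le_sum_of_subset_of_nonneg (Finset.subset_univ U)
      (fun k _ _ => hnnσ k)
  have hδ0 : 0 ≤ δ := by
    rw [hδ]
    have : (0:ℝ) ≤ ∑ k, σ k ^ 2 := Finset.sum_nonneg fun k _ => hnnσ k
    positivity
  have hsumA : ∑ k ∈ S, ∫ ω, ‖a k ω - ma k‖ ^ 2 ∂ℙ ≤ (K : ℝ) * δ :=
    le_trans (Finset.sum_le_sum fun k _ => hva k) (hSub S)
  have hsumB : ∑ k ∈ S, ∫ ω, ‖b k ω - mb k‖ ^ 2 ∂ℙ ≤ (K : ℝ) * δ :=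
    le_trans (Finset.sum_le_sum fun k _ => hvb k) (hSub S)
  have hsumBT : ∑ k ∈ T, ∫ ω, ‖b k ω - mb k‖ ^ 2 ∂ℙ ≤ (K : ℝ) * δ :=
    le_trans (Finset.sum_le_sum fun k _ => hvb k) (hSub T)
  -- coefficient computations
  have hcoef1 : (c₁ * w₁) ^ 2 * S.card * ((K : ℝ) * δ) = w₁ ^ 2 * δ / p₁ := by
    rw [hc₁, ← hKp₁]
    field_simp
  have hcoef2 : (c₁ * w₂) ^ 2 * S.card * ((K : ℝ) * δ) = w₂ ^ 2 * δ / p₁ := by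
    rw [hc₁, ← hKp₁]
    field_simp
  have hcoef3 : (c₂ * w₂) ^ 2 * T.card * ((K : ℝ) * δ) = w₂ ^ 2 * δ / p₂ := by
    rw [hc₂, ← hKp₂]
    field_simp
  have hE1 : (c₁ * w₁) ^ 2 * S.card * ∑ k ∈ S, ∫ ω, ‖a k ω - ma k‖ ^ 2 ∂ℙ
      ≤ w₁ ^ 2 * δ / p₁ := by
    rw [← hcoef1]
    exact mul_le_mul_of_nonneg_left hsumA (mul_nonneg (sq_nonneg _) (Nat.cast_nonneg _))
  have hE2 : (c₁ * w₂) ^ 2 * S.card * ∑ k ∈ S, ∫ ω, ‖b k ω - mb k‖ ^ 2 ∂ℙ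
      ≤ w₂ ^ 2 * δ / p₁ := by
    rw [← hcoef2]
    exact mul_le_mul_of_nonneg_left hsumB (mul_nonneg (sq_nonneg _) (Nat.cast_nonneg _))
  have hE3 : (c₂ * w₂) ^ 2 * T.card * ∑ k ∈ T, ∫ ω, ‖b k ω - mb k‖ ^ 2 ∂ℙ
      ≤ w₂ ^ 2 * δ / p₂ := by
    rw [← hcoef3]
    exact mul_le_mul_of_nonneg_left hsumBT (mul_nonneg (sq_nonneg _) (Nat.cast_nonneg _))
  have final : 3 * (w₁ ^ 2 * δ / p₁ + w₂ ^ 2 * δ / p₁ + w₂ ^ 2 * δ / p₂)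
      ≤ 4 * δ * (1 / p₁ + 1 / p₂) * (w₁ ^ 2 + w₂ ^ 2) := by
    have hq₁ : 0 < 1 / p₁ := by positivity
    have hq₂ : 0 < 1 / p₂ := by positivity
    have e₁ : w₁ ^ 2 * δ / p₁ = δ * (1 / p₁) * w₁ ^ 2 := by ring
    have e₂ : w₂ ^ 2 * δ / p₁ = δ * (1 / p₁) * w₂ ^ 2 := by ring
    have e₃ : w₂ ^ 2 * δ / p₂ = δ * (1 / p₂) * w₂ ^ 2 := by ring
    rw [e₁, e₂, e₃]
    nlinarith [mul_nonneg (mul_nonneg hδ0 hq₁.le) (sq_nonneg w₁),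
      mul_nonneg (mul_nonneg hδ0 hq₁.le) (sq_nonneg w₂),
      mul_nonneg (mul_nonneg hδ0 hq₂.le) (sq_nonneg w₁),
      mul_nonneg (mul_nonneg hδ0 hq₂.le) (sq_nonneg w₂)]
  calc ∫ ω, ‖f ω - ∫ ω', f ω' ∂ℙ‖ ^ 2 ∂ℙ
      ≤ ∫ ω, 3 * ((c₁ * w₁) ^ 2 * S.card * ∑ k ∈ S, ‖a k ω - ma k‖ ^ 2
        + (c₁ * w₂) ^ 2 * S.card * ∑ k ∈ S, ‖b k ω - mb k‖ ^ 2
        + (c₂ * w₂) ^ 2 * T.card * ∑ k ∈ T, ‖b k ω - mb k‖ ^ 2) ∂ℙ := step1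
    _ = 3 * ((c₁ * w₁) ^ 2 * S.card * ∑ k ∈ S, ∫ ω, ‖a k ω - ma k‖ ^ 2 ∂ℙ
        + (c₁ * w₂) ^ 2 * S.card * ∑ k ∈ S, ∫ ω, ‖b k ω - mb k‖ ^ 2 ∂ℙ
        + (c₂ * w₂) ^ 2 * T.card * ∑ k ∈ T, ∫ ω, ‖b k ω - mb k‖ ^ 2 ∂ℙ) := hint
    _ ≤ 3 * (w₁ ^ 2 * δ / p₁ + w₂ ^ 2 * δ / p₁ + w₂ ^ 2 * δ / p₂) := by linarith
    _ ≤ 4 * δ * (1 / p₁ + 1 / p₂) * (w₁ ^ 2 + w₂ ^ 2) := final
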